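/- The maximum of min_{i ≠ b} G_i(α_b, α_i) over feasible allocations α (α_{i,j} ≥ 0, Σ_{i,j} α_{i,j} = 1, with the convention G_i = 0 when some coordinate of α_b or α_i is zero) is attained and is strictly positive, and every maximizer α* satisfies α*_{i,j} > 0 for all 1 ≤ i ≤ K and 1 ≤ j ≤ D. -/

import Mathlib

open Finset Filter Topology

/-- The maximum of `min_{i ≠ b} G_i` over feasible allocations is attained, is strictly
positive, and every maximizer is strictly positive in all coordinates. -/
theorem stmt_14
    {K D : ℕ} (hK : 2 ≤ K) (hD : 1 ≤ D)
    (b : Fin K)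
    (μ : Fin K → Fin D → ℝ)
    (σ : Fin K → Fin D → ℝ) (hσ : ∀ i j, 0 < σ i j)
    (w : Fin D → ℝ) (hw : ∀ j, 0 < w j) (hw1 : ∑ j, w j = 1)
    (μbar : Fin K → ℝ) (hμbar : ∀ i, μbar i = ∑ j, w j * μ i j)
    (hbest : ∀ i, i ≠ b → μbar i < μbar b)
    (G : Fin K → (Fin K → Fin D → ℝ) → ℝ)
    (hGpos : ∀ i α, (∀ j, 0 < α b j) → (∀ j, 0 < α i j) →
      G i α = (μbar b - μbar i) ^ 2 /
        (2 * (∑ j, (σ b j) ^ 2 * (w j) ^ 2 / α b j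
            + ∑ j, (σ i j) ^ 2 * (w j) ^ 2 / α i j)))
    (hGzero : ∀ i α, (∃ j, α b j = 0 ∨ α i j = 0) → G i α = 0) :
    (∃ αs : Fin K → Fin D → ℝ,
      (∀ i j, 0 ≤ αs i j) ∧ (∑ i, ∑ j, αs i j = 1) ∧
      (∀ α' : Fin K → Fin D → ℝ, (∀ i j, 0 ≤ α' i j) → ∑ i, ∑ j, α' i j = 1 →
        (⨅ i : {i : Fin K // i ≠ b}, G i.1 α') ≤ ⨅ i : {i : Fin K // i ≠ b}, G i.1 αs) ∧
      0 < ⨅ i : {i : Fin K // i ≠ b}, G i.1 αs)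
    ∧
    (∀ αs : Fin K → Fin D → ℝ, (∀ i j, 0 ≤ αs i j) → ∑ i, ∑ j, αs i j = 1 →
      (∀ α' : Fin K → Fin D → ℝ, (∀ i j, 0 ≤ α' i j) → ∑ i, ∑ j, α' i j = 1 →
        (⨅ i : {i : Fin K // i ≠ b}, G i.1 α') ≤ ⨅ i : {i : Fin K // i ≠ b}, G i.1 αs) →
      ∀ i j, 0 < αs i j) := by
  classical
  haveI : NeZero K := ⟨by omega⟩
  haveI : NeZero D := ⟨by omega⟩
  haveI hne : Nonempty {i : Fin K // i ≠ b} := by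
    obtain ⟨i, hi⟩ := Fintype.exists_ne_of_one_lt_card (by rw [Fintype.card_fin]; omega) b
    exact ⟨⟨i, hi⟩⟩
  have hDne : (Finset.univ : Finset (Fin D)).Nonempty := Finset.univ_nonempty
  -- the feasible set
  set S : Set (Fin K → Fin D → ℝ) :=
    {α | (∀ i j, 0 ≤ α i j) ∧ ∑ i, ∑ j, α i j = 1} with hSdef
  -- denominator positivity
  have hden : ∀ (i : Fin K) (α : Fin K → Fin D → ℝ), (∀ j, 0 < α b j) → (∀ j, 0 < α i j) →
      0 < ∑ j, (σ b j) ^ 2 * (w j) ^ 2 / α b j + ∑ j, (σ i j) ^ 2 * (w j) ^ 2 / α i j := by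
    intro i α hb hi
    have h1 : 0 < ∑ j, (σ b j) ^ 2 * (w j) ^ 2 / α b j :=
      Finset.sum_pos (fun j _ => div_pos (mul_pos (pow_pos (hσ b j) 2) (pow_pos (hw j) 2)) (hb j)) hDne
    have h2 : 0 < ∑ j, (σ i j) ^ 2 * (w j) ^ 2 / α i j :=
      Finset.sum_pos (fun j _ => div_pos (mul_pos (pow_pos (hσ i j) 2) (pow_pos (hw j) 2)) (hi j)) hDne
    linarith
  -- numerator positivity
  have hnum : ∀ i : Fin K, i ≠ b → 0 < (μbar b - μbar i) ^ 2 := by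
    intro i hi
    exact pow_pos (sub_pos.mpr (hbest i hi)) 2
  -- G is nonnegative on nonnegative allocations
  have hGnonneg : ∀ (i : Fin K) (α : Fin K → Fin D → ℝ), (∀ i' j', 0 ≤ α i' j') →
      0 ≤ G i α := by
    intro i α hα
    by_cases hz : ∃ j, α b j = 0 ∨ α i j = 0
    · rw [hGzero i α hz]
    · push_neg at hz
      have hb : ∀ j, 0 < α b j := fun j => lt_of_le_of_ne (hα b j) (Ne.symm (hz j).1)
      have hi : ∀ j, 0 < α i j := fun j => lt_of_le_of_ne (hα i j) (Ne.symm (hz j).2)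
      rw [hGpos i α hb hi]
      have := hden i α hb hi
      positivity
  -- key bound: G i α ≤ C * α r j0 for r = b or r = i
  have hbound : ∀ (i : Fin K), i ≠ b → ∀ (r : Fin K), r = b ∨ r = i → ∀ (j0 : Fin D)
      (α : Fin K → Fin D → ℝ), (∀ i' j', 0 ≤ α i' j') →
      G i α ≤ (μbar b - μbar i) ^ 2 / (2 * ((σ r j0) ^ 2 * (w j0) ^ 2)) * α r j0 := by
    intro i hib r hr j0 α hα
    have hC : 0 ≤ (μbar b - μbar i) ^ 2 / (2 * ((σ r j0) ^ 2 * (w j0) ^ 2)) := by positivity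
    by_cases hz : ∃ j, α b j = 0 ∨ α i j = 0
    · rw [hGzero i α hz]
      exact mul_nonneg hC (hα r j0)
    · push_neg at hz
      have hb : ∀ j, 0 < α b j := fun j => lt_of_le_of_ne (hα b j) (Ne.symm (hz j).1)
      have hi : ∀ j, 0 < α i j := fun j => lt_of_le_of_ne (hα i j) (Ne.symm (hz j).2)
      rw [hGpos i α hb hi]
      have hr0 : ∀ j, 0 < α r j := by rcases hr with h | h <;> (subst h; assumption)
      have hterm : (σ r j0) ^ 2 * (w j0) ^ 2 / α r j0 ≤
          ∑ j, (σ b j) ^ 2 * (w j) ^ 2 / α b j + ∑ j, (σ i j) ^ 2 * (w j) ^ 2 / α i j := by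
        have h1 : 0 ≤ ∑ j, (σ b j) ^ 2 * (w j) ^ 2 / α b j :=
          Finset.sum_nonneg fun j _ => (div_pos (mul_pos (pow_pos (hσ b j) 2) (pow_pos (hw j) 2)) (hb j)).le
        have h2 : 0 ≤ ∑ j, (σ i j) ^ 2 * (w j) ^ 2 / α i j :=
          Finset.sum_nonneg fun j _ => (div_pos (mul_pos (pow_pos (hσ i j) 2) (pow_pos (hw j) 2)) (hi j)).le
        have hsingle : ∀ r' : Fin K, (∀ j, 0 < α r' j) →
            (σ r' j0) ^ 2 * (w j0) ^ 2 / α r' j0 ≤ ∑ j, (σ r' j) ^ 2 * (w j) ^ 2 / α r' j :=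
          fun r' hr' => Finset.single_le_sum
            (f := fun j => (σ r' j) ^ 2 * (w j) ^ 2 / α r' j)
            (fun j _ => (div_pos (mul_pos (pow_pos (hσ r' j) 2) (pow_pos (hw j) 2)) (hr' j)).le) (Finset.mem_univ j0)
        rcases hr with h | h
        · rw [h]; have := hsingle b hb; linarith
        · rw [h]; have := hsingle i hi; linarith
      have hpos0 : 0 < (σ r j0) ^ 2 * (w j0) ^ 2 / α r j0 :=
        div_pos (mul_pos (pow_pos (hσ r j0) 2) (pow_pos (hw j0) 2)) (hr0 j0)
      have hle : (μbar b - μbar i) ^ 2 /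
            (2 * (∑ j, (σ b j) ^ 2 * (w j) ^ 2 / α b j + ∑ j, (σ i j) ^ 2 * (w j) ^ 2 / α i j))
          ≤ (μbar b - μbar i) ^ 2 / (2 * ((σ r j0) ^ 2 * (w j0) ^ 2 / α r j0)) := by
        refine div_le_div_of_nonneg_left (by positivity) (by linarith) (by linarith)
      refine hle.trans (le_of_eq ?_)
      have h2 : α r j0 ≠ 0 := ne_of_gt (hr0 j0)
      field_simp
  -- continuity of the evaluation maps
  have hev : ∀ (r : Fin K) (j : Fin D),
      Continuous (fun α : Fin K → Fin D → ℝ => α r j) :=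
    fun r j => (continuous_apply j).comp (continuous_apply r)
  -- continuity of each G i on S
  have hGcont : ∀ i : Fin K, i ≠ b → ContinuousOn (G i) S := by
    intro i hib
    intro α0 hα0
    by_cases hz : ∃ j, α0 b j = 0 ∨ α0 i j = 0
    · -- boundary point: squeeze to 0
      have hG0 : G i α0 = 0 := hGzero i α0 hz
      rw [ContinuousWithinAt, hG0]
      obtain ⟨j0, hj0⟩ := hz
      -- choose the row with the zero
      obtain ⟨r, hr, hrz⟩ : ∃ r : Fin K, (r = b ∨ r = i) ∧ α0 r j0 = 0 := by
        rcases hj0 with h | h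
        · exact ⟨b, Or.inl rfl, h⟩
        · exact ⟨i, Or.inr rfl, h⟩
      set C := (μbar b - μbar i) ^ 2 / (2 * ((σ r j0) ^ 2 * (w j0) ^ 2)) with hC
      apply squeeze_zero' (g := fun α => C * α r j0)
      · filter_upwards [self_mem_nhdsWithin] with α hα
        exact hGnonneg i α hα.1
      · filter_upwards [self_mem_nhdsWithin] with α hα
        exact hbound i hib r hr j0 α hα.1
      · have : Tendsto (fun α : Fin K → Fin D → ℝ => C * α r j0) (nhdsWithin α0 S)
            (nhds (C * α0 r j0)) :=
          ((continuous_const.mul (hev r j0)).continuousWithinAt)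
        rw [hrz, mul_zero] at this
        exact this
    · -- interior point (for rows b, i): G agrees with the smooth formula nearby
      push_neg at hz
      have hb : ∀ j, 0 < α0 b j := fun j => lt_of_le_of_ne (hα0.1 b j) (Ne.symm (hz j).1)
      have hi : ∀ j, 0 < α0 i j := fun j => lt_of_le_of_ne (hα0.1 i j) (Ne.symm (hz j).2)
      set Ffun : (Fin K → Fin D → ℝ) → ℝ := fun α =>
        (μbar b - μbar i) ^ 2 /
          (2 * (∑ j, (σ b j) ^ 2 * (w j) ^ 2 / α b j
              + ∑ j, (σ i j) ^ 2 * (w j) ^ 2 / α i j)) with hFfun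
      have hU : IsOpen {α : Fin K → Fin D → ℝ | (∀ j, 0 < α b j) ∧ (∀ j, 0 < α i j)} := by
        have h1 : {α : Fin K → Fin D → ℝ | (∀ j, 0 < α b j) ∧ (∀ j, 0 < α i j)} =
            (⋂ j, {α | 0 < α b j}) ∩ (⋂ j, {α | 0 < α i j}) := by
          ext α; simp [Set.mem_iInter]
        rw [h1]
        exact ((isOpen_iInter_of_finite fun j =>
            isOpen_lt continuous_const (hev b j)).inter
          (isOpen_iInter_of_finite fun j => isOpen_lt continuous_const (hev i j)))
      have hmem : {α : Fin K → Fin D → ℝ | (∀ j, 0 < α b j) ∧ (∀ j, 0 < α i j)} ∈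
          nhdsWithin α0 S :=
        nhdsWithin_le_nhds (hU.mem_nhds ⟨hb, hi⟩)
      have hcongr : G i =ᶠ[nhdsWithin α0 S] Ffun := by
        filter_upwards [hmem] with α hα
        exact hGpos i α hα.1 hα.2
      have hFc : ContinuousAt Ffun α0 := by
        apply ContinuousAt.div continuousAt_const
        · apply ContinuousAt.mul continuousAt_const
          apply ContinuousAt.add
          · exact tendsto_finset_sum _ fun j _ =>
              ContinuousAt.div continuousAt_const ((hev b j).continuousAt)
                (ne_of_gt (hb j))
          · exact tendsto_finset_sum _ fun j _ =>
              ContinuousAt.div continuousAt_const ((hev i j).continuousAt)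
                (ne_of_gt (hi j))
        · have := hden i α0 hb hi
          positivity
      have : ContinuousWithinAt Ffun S α0 := hFc.continuousWithinAt
      exact this.congr_of_eventuallyEq hcongr (hGpos i α0 hb hi)
  -- the objective function
  set F : (Fin K → Fin D → ℝ) → ℝ := fun α => ⨅ i : {i : Fin K // i ≠ b}, G i.1 α with hF
  have hFinf' : ∀ α, F α = (Finset.univ : Finset {i : Fin K // i ≠ b}).inf'
      Finset.univ_nonempty (fun i => G i.1 α) := by
    intro α
    rw [Finset.inf'_univ_eq_ciInf]
  have hFcont : ContinuousOn F S := by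
    have : ContinuousOn (fun α => (Finset.univ : Finset {i : Fin K // i ≠ b}).inf'
        Finset.univ_nonempty (fun i => G i.1 α)) S :=
      ContinuousOn.finset_inf'_apply _ (fun i _ => hGcont i.1 i.2)
    exact this.congr (fun α _ => hFinf' α)
  -- compactness of S
  have hSsub : S ⊆ Set.Icc (fun _ _ => (0 : ℝ)) (fun _ _ => (1 : ℝ)) := by
    rintro α ⟨hα, hs⟩
    constructor
    · intro i; intro j; exact hα i j
    · intro i; intro j
      have h1 : ∑ j', α i j' ≤ ∑ i', ∑ j', α i' j' :=
        Finset.single_le_sum (fun i' _ => Finset.sum_nonneg fun j' _ => hα i' j')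
          (Finset.mem_univ i)
      have h2 : α i j ≤ ∑ j', α i j' :=
        Finset.single_le_sum (fun j' _ => hα i j') (Finset.mem_univ j)
      calc α i j ≤ ∑ i', ∑ j', α i' j' := h2.trans h1
        _ = 1 := hs
  have hSclosed : IsClosed S := by
    have h1 : S = {α : Fin K → Fin D → ℝ | ∀ i j, 0 ≤ α i j} ∩
        {α | ∑ i, ∑ j, α i j = 1} := rfl
    rw [h1]
    apply IsClosed.inter
    · have : {α : Fin K → Fin D → ℝ | ∀ i j, 0 ≤ α i j} =
          ⋂ i, ⋂ j, {α | 0 ≤ α i j} := by ext α; simp [Set.mem_iInter]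
      rw [this]
      exact isClosed_iInter fun i => isClosed_iInter fun j =>
        isClosed_le continuous_const (hev i j)
    · exact isClosed_eq (continuous_finset_sum _ fun i _ =>
        continuous_finset_sum _ fun j _ => hev i j) continuous_const
  have hScompact : IsCompact S :=
    IsCompact.of_isClosed_subset isCompact_Icc hSclosed hSsub
  -- the uniform allocation
  set α0 : Fin K → Fin D → ℝ := fun _ _ => 1 / (K * D) with hα0def
  have hKD : (0 : ℝ) < (K : ℝ) * (D : ℝ) := by
    have : (0:ℝ) < (K:ℝ) := by exact_mod_cast (by omega : 0 < K)
    have : (0:ℝ) < (D:ℝ) := by exact_mod_cast (by omega : 0 < D)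
    positivity
  have hα0pos : ∀ i j, 0 < α0 i j := fun i j => by
    simp only [hα0def]; positivity
  have hα0S : α0 ∈ S := by
    constructor
    · exact fun i j => (hα0pos i j).le
    · simp only [hα0def, Finset.sum_const, Finset.card_univ, Fintype.card_fin, nsmul_eq_mul]
      field_simp
  have hbddF : ∀ α : Fin K → Fin D → ℝ,
      BddBelow (Set.range fun i : {i : Fin K // i ≠ b} => G i.1 α) :=
    fun α => (Set.finite_range _).bddBelow
  -- F α0 > 0
  have hFα0 : 0 < F α0 := by
    obtain ⟨i0, hi0⟩ := Finite.exists_min (fun i : {i : Fin K // i ≠ b} => G i.1 α0)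
    have hGi0 : 0 < G i0.1 α0 := by
      rw [hGpos i0.1 α0 (fun j => hα0pos b j) (fun j => hα0pos i0.1 j)]
      have hd := hden i0.1 α0 (fun j => hα0pos b j) (fun j => hα0pos i0.1 j)
      exact div_pos (hnum i0.1 i0.2) (by linarith)
    exact lt_of_lt_of_le hGi0 (le_ciInf hi0)
  -- every feasible allocation with a zero coordinate has F = 0
  have hFzero : ∀ α ∈ S, (∃ i j, α i j = 0) → F α = 0 := by
    rintro α hαS ⟨i0, j0, hz⟩
    have hle : F α ≤ 0 := by
      by_cases hib : i0 = b
      · subst hib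
        obtain ⟨i1⟩ := hne
        have : G i1.1 α = 0 := hGzero i1.1 α ⟨j0, Or.inl hz⟩
        calc F α ≤ G i1.1 α := ciInf_le (hbddF α) i1
          _ = 0 := this
      · have : G i0 α = 0 := hGzero i0 α ⟨j0, Or.inr hz⟩
        calc F α ≤ G i0 α := ciInf_le (hbddF α) ⟨i0, hib⟩
          _ = 0 := this
    have hge : 0 ≤ F α := le_ciInf fun i => hGnonneg i.1 α hαS.1
    linarith
  -- existence of maximizer
  obtain ⟨αs, hαsS, hmax⟩ := hScompact.exists_isMaxOn ⟨α0, hα0S⟩ hFcont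
  constructor
  · refine ⟨αs, hαsS.1, hαsS.2, ?_, ?_⟩
    · intro α' h1 h2
      exact hmax (show α' ∈ S from ⟨h1, h2⟩)
    · exact lt_of_lt_of_le hFα0 (hmax hα0S)
  · intro αs' h1 h2 hmax' i j
    by_contra hcon
    push_neg at hcon
    have hz : αs' i j = 0 := le_antisymm hcon (h1 i j)
    have hFαs'0 : F αs' = 0 := hFzero αs' ⟨h1, h2⟩ ⟨i, j, hz⟩
    have := hmax' α0 (fun i j => (hα0pos i j).le) hα0S.2
    rw [show (⨅ i : {i : Fin K // i ≠ b}, G i.1 αs') = F αs' from rfl, hFαs'0] at this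
    exact absurd (lt_of_lt_of_le hFα0 this) (lt_irrefl 0)
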